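/- Let G = K_{2m} be the complete loopless graph on 2m vertices and let x be any configuration with light number L(x) = m. Then ML_G(x) = ML(G) = 0 and ML*_G(x) = ML*(G) = m; in particular ML*(G) − ML(G) = m = |V(G)|/2. -/

import Mathlib

structure LoopGraph (V : Type) [Fintype V] [DecidableEq V] where
  N : V → Finset V
  symm : ∀ u v, u ∈ N v ↔ v ∈ N u

namespace LoopGraph

variable {V : Type} [Fintype V] [DecidableEq V]

/-- Indicator vector of a finite set of vertices, as a configuration over `F_2`. -/
def chi (S : Finset V) : V → ZMod 2 := fun u => if u ∈ S then 1 else 0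

/-- One regular move of the sigma-game. -/
def RegStep (G : LoopGraph V) (x y : V → ZMod 2) : Prop :=
  ∃ v, y = x + chi (G.N v)

/-- One valid move of the lit-only sigma-game. -/
def ValidStep (G : LoopGraph V) (x y : V → ZMod 2) : Prop :=
  ∃ v, x v = 1 ∧ y = x + chi (G.N v)

def RegReach (G : LoopGraph V) : (V → ZMod 2) → (V → ZMod 2) → Prop :=
  Relation.ReflTransGen G.RegStep

def ValidReach (G : LoopGraph V) : (V → ZMod 2) → (V → ZMod 2) → Prop :=
  Relation.ReflTransGen G.ValidStep

/-- The light number of a configuration. -/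
def L (x : V → ZMod 2) : ℕ := (Finset.univ.filter fun v => x v = 1).card

/-- Minimum light number of a configuration for the sigma-game. -/
noncomputable def ML (G : LoopGraph V) (x : V → ZMod 2) : ℕ :=
  sInf (L '' {y | G.RegReach x y})

/-- Minimum light number of a configuration for the lit-only sigma-game. -/
noncomputable def MLs (G : LoopGraph V) (x : V → ZMod 2) : ℕ :=
  sInf (L '' {y | G.ValidReach x y})

/-- Minimum light number of the sigma-game on `G`. -/
noncomputable def MLmax (G : LoopGraph V) : ℕ := ⨆ x, G.ML x

/-- Minimum light number of the lit-only sigma-game on `G`. -/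
noncomputable def MLsmax (G : LoopGraph V) : ℕ := ⨆ x, G.MLs x

/-- Non-loop adjacency. -/
def Adj (G : LoopGraph V) (u w : V) : Prop := u ≠ w ∧ w ∈ G.N u

def Connected (G : LoopGraph V) : Prop :=
  ∀ u w : V, Relation.ReflTransGen G.Adj u w

/-- Degree, counting non-loop edges only. -/
def deg (G : LoopGraph V) (v : V) : ℕ := ((G.N v).erase v).card

/-- Underlying simple graph (loops discarded). -/
def simple (G : LoopGraph V) : SimpleGraph V where
  Adj := G.Adj
  symm := by
    refine ⟨fun u w h => ?_⟩
    exact ⟨h.1.symm, (G.symm w u).mp h.2⟩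
  loopless := by refine ⟨fun u h => ?_⟩; exact h.1 rfl

/-- Induced subgraph on a finite vertex subset. -/
def induce (G : LoopGraph V) (T : Finset V) : LoopGraph {u // u ∈ T} where
  N u := Finset.univ.filter fun w => w.val ∈ G.N u.val
  symm := by
    intro u w
    simp only [Finset.mem_filter, Finset.mem_univ, true_and]
    exact G.symm u.1 w.1

end LoopGraph

open LoopGraph

section Aux

variable {m : ℕ} {G : LoopGraph (Fin (2 * m))}

lemma zmod2_cases (a : ZMod 2) : a = 0 ∨ a = 1 := by revert a; decide

lemma chiN (hN : ∀ v, G.N v = Finset.univ.erase v) (v u : Fin (2 * m)) :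
    chi (G.N v) u = if u = v then 0 else 1 := by
  by_cases h : u = v <;> simp [chi, hN v, Finset.mem_erase, h]

lemma sumChi (hN : ∀ v, G.N v = Finset.univ.erase v) (S : Finset (Fin (2 * m)))
    (u : Fin (2 * m)) :
    (∑ v ∈ S, chi (G.N v)) u = (S.card : ZMod 2) + (if u ∈ S then 1 else 0) := by
  rw [Finset.sum_apply]
  have h1 : ∀ v ∈ S, chi (G.N v) u = 1 + (if u = v then 1 else 0) := by
    intro v _
    rw [chiN hN]
    by_cases h : u = v <;> simp [h] <;> decide
  rw [Finset.sum_congr rfl h1, Finset.sum_add_distrib, Finset.sum_const,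
    Finset.sum_ite_eq]
  simp [mul_comm]

lemma regReach_sum (x : Fin (2 * m) → ZMod 2) (S : Finset (Fin (2 * m))) :
    G.RegReach x (x + ∑ v ∈ S, chi (G.N v)) := by
  classical
  induction S using Finset.induction with
  | empty => rw [Finset.sum_empty, add_zero]; exact Relation.ReflTransGen.refl
  | @insert a S h ih =>
    refine Relation.ReflTransGen.tail ih ⟨a, ?_⟩
    rw [Finset.sum_insert h]
    ring

lemma natCast_zmod2_even {n : ℕ} (h : n % 2 = 0) : (n : ZMod 2) = 0 := by
  rw [← ZMod.natCast_mod n 2, h, Nat.cast_zero]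

lemma natCast_zmod2_odd {n : ℕ} (h : n % 2 = 1) : (n : ZMod 2) = 1 := by
  rw [← ZMod.natCast_mod n 2, h, Nat.cast_one]

lemma regReach_zero (hN : ∀ v, G.N v = Finset.univ.erase v)
    (x : Fin (2 * m) → ZMod 2) : G.RegReach x 0 := by
  classical
  set T : Finset (Fin (2 * m)) := Finset.univ.filter fun v => x v = 1 with hT
  have hmemT : ∀ u, u ∈ T ↔ x u = 1 := by intro u; simp [hT]
  have hxchi : ∀ u, x u = (if u ∈ T then 1 else 0) := by
    intro u
    by_cases hu : u ∈ T
    · rw [if_pos hu]; exact (hmemT u).mp hu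
    · rw [if_neg hu]
      rcases zmod2_cases (x u) with h | h
      · exact h
      · exact absurd ((hmemT u).mpr h) hu
  by_cases hpar : T.card % 2 = 0
  · have key : x + ∑ v ∈ T, chi (G.N v) = 0 := by
      funext u
      rw [Pi.add_apply, sumChi hN, natCast_zmod2_even hpar, hxchi u]
      by_cases h : u ∈ T <;> simp [h] <;> decide
    have := regReach_sum (G := G) x T
    rwa [key] at this
  · have hcard : T.card ≤ 2 * m := by
      simpa using Finset.card_filter_le Finset.univ (fun v => x v = 1)
    have hccard : Tᶜ.card = 2 * m - T.card := by
      rw [Finset.card_compl]; simp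
    have hcpar : Tᶜ.card % 2 = 1 := by rw [hccard]; omega
    have key : x + ∑ v ∈ Tᶜ, chi (G.N v) = 0 := by
      funext u
      rw [Pi.add_apply, sumChi hN, natCast_zmod2_odd hcpar, hxchi u]
      by_cases h : u ∈ T <;> simp [Finset.mem_compl, h] <;> decide
    have := regReach_sum (G := G) x Tᶜ
    rwa [key] at this

lemma ML_eq_zero (hN : ∀ v, G.N v = Finset.univ.erase v)
    (x : Fin (2 * m) → ZMod 2) : G.ML x = 0 := by
  apply Nat.sInf_eq_zero.mpr
  left
  exact ⟨0, regReach_zero hN x, by simp [L]⟩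

lemma L_le (x : Fin (2 * m) → ZMod 2) : L x ≤ 2 * m := by
  simpa [L] using Finset.card_filter_le Finset.univ (fun v => x v = 1)

lemma L_step (hN : ∀ v, G.N v = Finset.univ.erase v)
    (x : Fin (2 * m) → ZMod 2) (v : Fin (2 * m)) (hv : x v = 1) :
    L (x + chi (G.N v)) = 2 * m + 1 - L x := by
  classical
  have hfilt : (Finset.univ.filter fun u => (x + chi (G.N v)) u = 1)
      = insert v (Finset.univ.filter fun u => x u = 0) := by
    ext u
    simp only [Finset.mem_filter, Finset.mem_univ, true_and, Finset.mem_insert,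
      Pi.add_apply, chiN hN]
    by_cases h : u = v
    · subst h; simp [hv]
    · simp only [if_neg h, h, false_or]
      rcases zmod2_cases (x u) with h2 | h2 <;> rw [h2] <;> decide
  have hvnot : v ∉ (Finset.univ.filter fun u => x u = 0) := by
    simp [hv]
  have hsplit : (Finset.univ.filter fun u => x u = 0).card +
      (Finset.univ.filter fun u => x u = 1).card = 2 * m := by
    have := Finset.card_filter_add_card_filter_not
      (s := (Finset.univ : Finset (Fin (2 * m)))) (p := fun u => x u = 1)
    have hcong : (Finset.univ.filter fun u => ¬ x u = 1)
        = (Finset.univ.filter fun u => x u = 0) := by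
      apply Finset.filter_congr
      intro u _
      rcases zmod2_cases (x u) with h | h <;> rw [h] <;> simp
    rw [hcong] at this
    have huniv : (Finset.univ : Finset (Fin (2 * m))).card = 2 * m := by simp
    omega
  unfold L
  rw [hfilt, Finset.card_insert_of_notMem hvnot]
  have hle := L_le x
  unfold L at hle
  omega

lemma valid_L (hN : ∀ v, G.N v = Finset.univ.erase v)
    {x y : Fin (2 * m) → ZMod 2} (hx : L x = m) (h : G.ValidReach x y) :
    L y = m ∨ L y = m + 1 := by
  induction h with
  | refl => left; exact hx
  | tail _ hstep ih =>
    rename_i b c _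
    obtain ⟨v, hv, rfl⟩ := hstep
    rw [L_step hN b v hv]
    have hb := L_le b
    rcases ih with h | h <;> omega

lemma MLs_le (hN : ∀ v, G.N v = Finset.univ.erase v)
    (x : Fin (2 * m) → ZMod 2) : G.MLs x ≤ m := by
  classical
  by_cases h : L x ≤ m
  · exact le_trans (Nat.sInf_le ⟨x, Relation.ReflTransGen.refl, rfl⟩) h
  · push_neg at h
    have hpos : 0 < (Finset.univ.filter fun v => x v = 1).card := by
      unfold L at h; omega
    obtain ⟨v, hv⟩ := Finset.card_pos.mp hpos
    have hv1 : x v = 1 := (Finset.mem_filter.mp hv).2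
    have hreach : G.ValidReach x (x + chi (G.N v)) :=
      Relation.ReflTransGen.single ⟨v, hv1, rfl⟩
    have hL : L (x + chi (G.N v)) = 2 * m + 1 - L x := L_step hN x v hv1
    have hle := L_le x
    have : G.MLs x ≤ L (x + chi (G.N v)) :=
      Nat.sInf_le ⟨_, hreach, rfl⟩
    omega

lemma MLs_eq (hN : ∀ v, G.N v = Finset.univ.erase v)
    {x : Fin (2 * m) → ZMod 2} (hx : L x = m) : G.MLs x = m := by
  apply le_antisymm (MLs_le hN x)
  have : m ≤ sInf (L '' {y | G.ValidReach x y}) := by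
    refine le_csInf ⟨m, ⟨x, Relation.ReflTransGen.refl, hx⟩⟩ ?_
    rintro b ⟨y, hy, rfl⟩
    rcases valid_L hN hx hy with h | h <;> omega
  exact this

end Aux

open LoopGraph in
theorem complete_graph_ML_and_MLs
    (m : ℕ) (G : LoopGraph (Fin (2 * m)))
    (hN : ∀ v, G.N v = Finset.univ.erase v)
    (x : Fin (2 * m) → ZMod 2) (hx : L x = m) :
    G.ML x = 0 ∧ G.MLmax = 0 ∧ G.MLs x = m ∧ G.MLsmax = m ∧
    G.MLsmax - G.MLmax = m := by
  have h1 : G.ML x = 0 := ML_eq_zero hN x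
  have h2 : G.MLmax = 0 := by
    have : G.MLmax ≤ 0 := ciSup_le fun y => (ML_eq_zero hN y).le
    omega
  have h3 : G.MLs x = m := MLs_eq hN hx
  have h4 : G.MLsmax = m := by
    apply le_antisymm (ciSup_le fun y => MLs_le hN y)
    have hb : BddAbove (Set.range fun y => G.MLs y) := by
      refine ⟨m, ?_⟩
      rintro _ ⟨y, rfl⟩
      exact MLs_le hN y
    have := le_ciSup hb x
    rw [h3] at this
    exact this
  exact ⟨h1, h2, h3, h4, by omega⟩
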